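/- Let α = (√13+3)/4 and R = (√13−1)/2. For all nonnegative reals w_i, w_j, w_e, w_f such that 2α·w_e ≥ w_i + w_j, w_j ≤ w_f, w_i ≤ w_f, and w_i > R·w_e, we have w_j + w_i − R·w_e ≤ (2 − R/α)·w_f < R·w_f. -/
import Mathlib

theorem stmt11 (α R : ℝ)
    (hα : α = (Real.sqrt 13 + 3) / 4)
    (hR : R = (Real.sqrt 13 - 1) / 2)
    (w_i w_j w_e w_f : ℝ) (hi : 0 ≤ w_i) (hj : 0 ≤ w_j) (he : 0 ≤ w_e) (hf : 0 ≤ w_f)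
    (h1 : 2 * α * w_e ≥ w_i + w_j) (h2 : w_j ≤ w_f) (h3 : w_i ≤ w_f)
    (h4 : w_i > R * w_e) :
    w_j + w_i - R * w_e ≤ (2 - R / α) * w_f ∧ (2 - R / α) * w_f < R * w_f := by
  have hs : Real.sqrt 13 ^ 2 = 13 := Real.sq_sqrt (by norm_num)
  have hs3 : 3 < Real.sqrt 13 := by nlinarith [Real.sqrt_nonneg 13]
  have hs4 : Real.sqrt 13 < 4 := by nlinarith [Real.sqrt_nonneg 13]
  have hαpos : 0 < α := by rw [hα]; linarith
  have hRα : R / α = 8 - 2 * Real.sqrt 13 := by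
    rw [hR, hα, div_eq_iff (by linarith)]
    nlinarith
  have hRpos : 0 < R := by rw [hR]; linarith
  have hwf : 0 < w_f := lt_of_lt_of_le (lt_of_le_of_lt (by positivity) h4) h3
  constructor
  · rw [hRα]
    have key : R * w_e ≥ (8 - 2 * Real.sqrt 13) / 2 * (w_i + w_j) := by
      rw [hR]
      nlinarith [mul_le_mul_of_nonneg_left h1 (show (0:ℝ) ≤ (Real.sqrt 13 - 1)/2 by linarith)]
    nlinarith
  · rw [hRα, hR]
    nlinarith
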